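/- arXiv:1610.05500 — 2 statements merged into one kernel-verified Lean document; each statement's English description precedes it below -/
import Mathlib

section
/- Let γ₁, γ₂, l > 0 and let r₁, r₂, r₃ be the complex roots of X³ + (γ₁+γ₂)X² + (l²+1+γ₁γ₂)X + γ₁l² + γ₂ with r₁ real and r₁ ∈ (−(γ₁+γ₂), 0). Then Re(r₂) = Re(r₃) = −(r₁+γ₁+γ₂)/2 < 0 whenever r₂ and r₃ are non-real complex conjugates, and if r₂, r₃ are real then r₂ < 0 and r₃ < 0. In all cases, every root of the cubic has strictly negative real part. -/
theorem cubic_roots_negative_re (γ₁ γ₂ l : ℝ) (hγ₁ : 0 < γ₁) (hγ₂ : 0 < γ₂) (hl : 0 < l)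
    (r₁ : ℝ) (r₂ r₃ : ℂ)
    (hr₁ : r₁ ∈ Set.Ioo (-(γ₁ + γ₂)) 0)
    (hfact : ∀ X : ℂ,
      X ^ 3 + ((γ₁ : ℂ) + γ₂) * X ^ 2 + ((l : ℂ) ^ 2 + 1 + γ₁ * γ₂) * X + (γ₁ : ℂ) * l ^ 2 + γ₂
        = (X - r₁) * (X - r₂) * (X - r₃)) :
    ((r₂.im ≠ 0 ∧ r₂ = (starRingEnd ℂ) r₃) →
        (r₂.re = -(r₁ + γ₁ + γ₂) / 2 ∧ r₃.re = -(r₁ + γ₁ + γ₂) / 2 ∧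
          -(r₁ + γ₁ + γ₂) / 2 < 0)) ∧
    ((r₂.im = 0 ∧ r₃.im = 0) → (r₂.re < 0 ∧ r₃.re < 0)) ∧
    (r₁ < 0 ∧ r₂.re < 0 ∧ r₃.re < 0) := by
  obtain ⟨ha, hb⟩ := hr₁
  have h0 := hfact 0
  have h1 := hfact 1
  have hm1 := hfact (-1)
  have e1 : (r₁ : ℂ) + r₂ + r₃ = -((γ₁ : ℂ) + γ₂) := by
    linear_combination (1/2 : ℂ) * h1 + (1/2 : ℂ) * hm1 - h0
  have e3 : (r₁ : ℂ) * r₂ * r₃ = -((γ₁ : ℂ) * l ^ 2 + γ₂) := by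
    linear_combination h0
  -- real/imaginary parts
  have S : r₁ + r₂.re + r₃.re = -(γ₁ + γ₂) := by
    have := congrArg Complex.re e1; simpa using this
  have Si : r₂.im + r₃.im = 0 := by
    have := congrArg Complex.im e1; simpa using this
  have Pr : r₁ * (r₂.re * r₃.re - r₂.im * r₃.im) = -(γ₁ * l ^ 2 + γ₂) := by
    have := congrArg Complex.re e3
    simp [Complex.mul_re, Complex.mul_im, ← Complex.ofReal_pow] at this
    linear_combination this
  have Pi : r₁ * (r₂.re * r₃.im + r₂.im * r₃.re) = 0 := by
    have := congrArg Complex.im e3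
    simp [Complex.mul_re, Complex.mul_im, ← Complex.ofReal_pow] at this
    linear_combination this
  have hr₁ne : r₁ ≠ 0 := ne_of_lt hb
  have Pi' : r₂.re * r₃.im + r₂.im * r₃.re = 0 := by
    rcases mul_eq_zero.mp Pi with h | h
    · exact absurd h hr₁ne
    · exact h
  have hsum : r₂.re + r₃.re = -(γ₁ + γ₂) - r₁ := by linarith
  have hsumneg : r₂.re + r₃.re < 0 := by linarith
  have key : r₂.re < 0 ∧ r₃.re < 0 := by
    by_cases him : r₂.im = 0
    · have him3 : r₃.im = 0 := by linarith
      have hprod : r₁ * (r₂.re * r₃.re) = -(γ₁ * l ^ 2 + γ₂) := by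
        rw [him, him3] at Pr; linarith [Pr]
      have hpos : 0 < r₂.re * r₃.re := by nlinarith [mul_pos hγ₁ (mul_pos hl hl)]
      constructor <;> nlinarith
    · have him3 : r₃.im = -r₂.im := by linarith
      have : r₂.im * (r₃.re - r₂.re) = 0 := by
        rw [him3] at Pi'; ring_nf; ring_nf at Pi'; linarith
      have heq : r₃.re = r₂.re := by
        rcases mul_eq_zero.mp this with h | h
        · exact absurd h him
        · linarith
      constructor <;> nlinarith
  refine ⟨?_, fun _ => key, hb, key⟩
  rintro ⟨him, hconj⟩
  have hre : r₂.re = r₃.re := by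
    rw [hconj]; simp
  have hval : r₂.re = -(r₁ + γ₁ + γ₂) / 2 := by
    rw [hre] at hsum ⊢; linarith
  exact ⟨hval, by rw [← hre]; exact hval, by linarith⟩
end

section
/- (Putzer's algorithm for n = 2.) Let A be a 2×2 complex matrix with eigenvalues λ₁, λ₂ (listed with multiplicity). Define r₁(t) = e^{λ₁ t} and r₂(t) = ∫₀ᵗ e^{λ₂(t−s)} r₁(s) ds. Then for all t ∈ ℝ, exp(tA) = r₁(t)·I + r₂(t)·(A − λ₁ I). -/
open NormedSpace in
private lemma exp_smul_one_matrix (z : ℂ) :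
    exp (z • (1 : Matrix (Fin 2) (Fin 2) ℂ)) = Complex.exp z • (1 : Matrix (Fin 2) (Fin 2) ℂ) := by
  letI : SeminormedRing (Matrix (Fin 2) (Fin 2) ℂ) := Matrix.linftyOpSemiNormedRing
  letI : NormedRing (Matrix (Fin 2) (Fin 2) ℂ) := Matrix.linftyOpNormedRing
  letI : NormedAlgebra ℂ (Matrix (Fin 2) (Fin 2) ℂ) := Matrix.linftyOpNormedAlgebra
  rw [← Algebra.algebraMap_eq_smul_one, ← Algebra.algebraMap_eq_smul_one, Complex.exp_eq_exp_ℂ]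
  exact (algebraMap_exp_comm (𝕂 := ℂ) z).symm

open Polynomial in
theorem putzer_two_by_two (A : Matrix (Fin 2) (Fin 2) ℂ) (lam₁ lam₂ : ℂ)
    (hchar : A.charpoly = (X - C lam₁) * (X - C lam₂))
    (r₁ r₂ : ℝ → ℂ)
    (hr₁ : ∀ t : ℝ, r₁ t = Complex.exp (lam₁ * t))
    (hr₂ : ∀ t : ℝ, r₂ t = ∫ s in (0:ℝ)..t, Complex.exp (lam₂ * (t - s)) * r₁ s) :
    ∀ t : ℝ, NormedSpace.exp ((t : ℂ) • A)
      = r₁ t • (1 : Matrix (Fin 2) (Fin 2) ℂ) + r₂ t • (A - lam₁ • (1 : Matrix (Fin 2) (Fin 2) ℂ)) := by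
  intro t
  obtain ⟨N, hNdef⟩ : ∃ N : Matrix (Fin 2) (Fin 2) ℂ, N = A - lam₁ • 1 := ⟨_, rfl⟩
  obtain ⟨μ, hμdef⟩ : ∃ μ : ℂ, μ = lam₂ - lam₁ := ⟨_, rfl⟩
  -- Cayley–Hamilton
  have hCH : (A - lam₁ • 1) * (A - lam₂ • 1) = 0 := by
    have h := Matrix.aeval_self_charpoly A
    rw [hchar] at h
    simpa [map_mul, map_sub, Polynomial.aeval_X, Polynomial.aeval_C,
      Algebra.algebraMap_eq_smul_one] using h
  have hN2 : N * N = μ • N := by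
    have h1 : A - lam₂ • (1 : Matrix (Fin 2) (Fin 2) ℂ) = N - μ • 1 := by
      rw [hNdef, hμdef]; module
    have h := hCH
    rw [h1, ← hNdef] at h
    rw [mul_sub, mul_smul_comm, mul_one, sub_eq_zero] at h
    exact h
  have hpow : ∀ k : ℕ, N ^ (k + 1) = μ ^ k • N := by
    intro k
    induction k with
    | zero => simp
    | succ k ih =>
      rw [pow_succ, ih, smul_mul_assoc, hN2, smul_smul, pow_succ]
  -- the scalar series
  obtain ⟨f, hfdef⟩ : ∃ f : ℕ → ℂ,
      f = fun n => (((n + 1).factorial : ℂ))⁻¹ * ((t : ℂ) ^ (n + 1) * μ ^ n) := ⟨_, rfl⟩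
  -- value of the scalar series
  obtain ⟨c, hc, hcval⟩ : ∃ c : ℂ, HasSum f c ∧ r₂ t = Complex.exp (lam₁ * t) * c := by
    by_cases hμ : μ = 0
    · refine ⟨(t : ℂ), ?_, ?_⟩
      · have hz : ∀ n : ℕ, n ≠ 0 → f n = 0 := by
          intro n hn
          simp [hfdef, hμ, zero_pow hn]
        have h0 : f 0 = (t : ℂ) := by simp [hfdef]
        simpa [h0] using hasSum_single (f := f) 0 hz
      · have hl : lam₂ = lam₁ := by
          rw [hμdef, sub_eq_zero] at hμ; exact hμ
        rw [hr₂ t]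
        have hint : ∀ s : ℝ, Complex.exp (lam₂ * ((t : ℝ) - s)) * r₁ s
            = Complex.exp (lam₁ * t) := by
          intro s
          rw [hr₁ s, hl, ← Complex.exp_add]
          congr 1
          push_cast
          ring
        rw [intervalIntegral.integral_congr (fun s _ => hint s)]
        simp [Complex.real_smul, mul_comm]
    · refine ⟨μ⁻¹ * (Complex.exp ((t : ℂ) * μ) - 1), ?_, ?_⟩
      · have h1 : HasSum (fun n : ℕ => ((t : ℂ) * μ) ^ n / n.factorial)
            (Complex.exp ((t : ℂ) * μ)) := by
          have := NormedSpace.expSeries_div_hasSum_exp ((t : ℂ) * μ)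
          rwa [← Complex.exp_eq_exp_ℂ] at this
        have h2 : HasSum (fun n : ℕ => ((t : ℂ) * μ) ^ (n + 1) / (n + 1).factorial)
            (Complex.exp ((t : ℂ) * μ) - 1) := by
          have := (hasSum_nat_add_iff' (f := fun n : ℕ => ((t : ℂ) * μ) ^ n / n.factorial)
            (g := Complex.exp ((t : ℂ) * μ)) 1).mpr h1
          simpa using this
        have h3 := h2.mul_left μ⁻¹
        suffices hfeq : f = fun n : ℕ => μ⁻¹ * (((t : ℂ) * μ) ^ (n + 1) / (n + 1).factorial) by
          rw [hfeq]; exact h3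
        funext n
        have hfac : (((n + 1).factorial : ℂ)) ≠ 0 :=
          Nat.cast_ne_zero.mpr (Nat.factorial_ne_zero _)
        rw [hfdef]
        simp only [mul_pow]
        field_simp
        ring
      · rw [hr₂ t]
        have hint : ∀ s : ℝ, Complex.exp (lam₂ * ((t : ℝ) - s)) * r₁ s
            = Complex.exp (lam₂ * t) * Complex.exp ((-μ) * s) := by
          intro s
          rw [hr₁ s, ← Complex.exp_add, ← Complex.exp_add]
          congr 1
          rw [hμdef]
          push_cast
          ring
        rw [intervalIntegral.integral_congr (fun s _ => hint s)]
        rw [intervalIntegral.integral_const_mul, integral_exp_mul_complex (neg_ne_zero.mpr hμ)]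
        have hE : Complex.exp (lam₂ * t) = Complex.exp (lam₁ * t) * Complex.exp ((t : ℂ) * μ) := by
          rw [← Complex.exp_add]
          congr 1
          rw [hμdef]; ring
        have hE2 : Complex.exp ((-μ) * t) * Complex.exp ((t : ℂ) * μ) = 1 := by
          rw [← Complex.exp_add, show (-μ) * (t : ℂ) + (t : ℂ) * μ = 0 by ring, Complex.exp_zero]
        rw [hE]
        simp only [Complex.ofReal_zero, mul_zero, Complex.exp_zero]
        rw [show Complex.exp ((-μ) * (t : ℂ)) = (Complex.exp ((t : ℂ) * μ))⁻¹ from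
          eq_inv_of_mul_eq_one_left hE2]
        field_simp
        ring
  -- exp (t • N) = 1 + c • N
  have hexpN : NormedSpace.exp ((t : ℂ) • N) = 1 + c • N := by
    have hsmulN : HasSum (fun n => f n • N) (c • N) := hc.smul_const N
    have h4 : HasSum (fun n : ℕ => (((n + 1).factorial : ℂ))⁻¹ • ((t : ℂ) • N) ^ (n + 1))
        (c • N) := by
      have heq : (fun n : ℕ => (((n + 1).factorial : ℂ))⁻¹ • ((t : ℂ) • N) ^ (n + 1))
          = fun n => f n • N := by
        funext n
        rw [_root_.smul_pow, hpow n, hfdef]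
        simp [smul_smul, mul_assoc]
      rw [heq]
      exact hsmulN
    have h5 := (hasSum_nat_add_iff
      (f := fun n : ℕ => ((n.factorial : ℂ))⁻¹ • ((t : ℂ) • N) ^ n) 1).mp h4
    have h6 : HasSum (fun n : ℕ => ((n.factorial : ℂ))⁻¹ • ((t : ℂ) • N) ^ n) (c • N + 1) := by
      simpa using h5
    rw [NormedSpace.exp_eq_tsum ℂ]
    exact h6.tsum_eq.trans (add_comm _ _)
  -- split exp (t • A)
  have hsplit : (t : ℂ) • A = ((t : ℂ) * lam₁) • (1 : Matrix (Fin 2) (Fin 2) ℂ) + (t : ℂ) • N := by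
    rw [hNdef]; module
  have hcomm : Commute (((t : ℂ) * lam₁) • (1 : Matrix (Fin 2) (Fin 2) ℂ)) ((t : ℂ) • N) :=
    ((Commute.one_left _).smul_left _).smul_right _
  rw [hsplit, Matrix.exp_add_of_commute _ _ hcomm, exp_smul_one_matrix, hexpN,
    hr₁ t, hcval, ← hNdef, smul_mul_assoc, one_mul, smul_add, smul_smul,
    mul_comm ((t : ℂ)) lam₁]
end
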